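/- There exists an unpredictable sequence with values in any finite metric space S having at least two elements: i.e., a sequence x : ℕ → S together with ε₀ > 0 and diverging sequences ζ_n, η_n of positive integers such that x_{i+ζ_n} = x_i for all i ≤ n, and d(x_{ζ_n+η_n}, x_{η_n}) ≥ ε₀ for all n. -/

import Mathlib

/-- The metric δ(x,y) = Σ_{k=1}^∞ d(x_k,y_k)/2^k on the space F = ℕ → S of
sequences in S (here the k-th coordinate, k = 0,1,2,..., plays the role of
x_{k+1}, so it carries the weight 1/2^{k+1}). -/
noncomputable def seqDist {S : Type*} [MetricSpace S] (x y : ℕ → S) : ℝ :=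
  ∑' k : ℕ, dist (x k) (y k) / 2 ^ (k + 1)

/-- The shift map φ(x)_k = x_{k+1}. -/
def shift {S : Type*} (x : ℕ → S) : ℕ → S := fun k => x (k + 1)

private lemma padic_add_pow {i L : ℕ} (hi : i ≠ 0) (hL : padicValNat 2 i < L) :
    padicValNat 2 (i + 2 ^ L) = padicValNat 2 i := by
  haveI : Fact (Nat.Prime 2) := ⟨Nat.prime_two⟩
  set e := padicValNat 2 i with he
  have hne : i + 2 ^ L ≠ 0 := by positivity
  have hdvd : 2 ^ e ∣ i + 2 ^ L :=
    dvd_add pow_padicValNat_dvd (pow_dvd_pow 2 hL.le)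
  have hndvd : ¬ 2 ^ (e + 1) ∣ i + 2 ^ L := by
    intro h
    have h1 : 2 ^ (e + 1) ∣ 2 ^ L := pow_dvd_pow 2 hL
    have h2 : 2 ^ (e + 1) ∣ i := (Nat.dvd_add_right h1).mp (by rwa [Nat.add_comm i (2 ^ L)] at h)
    have := (padicValNat_dvd_iff (e+1) i).mp h2
    omega
  have h1 : e ≤ padicValNat 2 (i + 2 ^ L) := by
    have := (padicValNat_dvd_iff e (i + 2 ^ L)).mp hdvd
    omega
  have h2 : padicValNat 2 (i + 2 ^ L) < e + 1 := by
    by_contra h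
    exact hndvd ((padicValNat_dvd_iff (e+1) (i + 2 ^ L)).mpr (Or.inr (by omega)))
  omega

private lemma padic_lt {i n : ℕ} (hi : i ≠ 0) (hin : i ≤ n) :
    padicValNat 2 i < 2 * n + 2 := by
  have h1 : 2 ^ padicValNat 2 i ≤ i := Nat.le_of_dvd (Nat.pos_of_ne_zero hi) pow_padicValNat_dvd
  have h2 : n < 2 ^ (2 * n + 2) := by
    calc n < 2 ^ n := Nat.lt_two_pow_self
    _ ≤ 2 ^ (2 * n + 2) := Nat.pow_le_pow_right (by norm_num) (by omega)
  exact (Nat.pow_lt_pow_iff_right (a := 2) (by norm_num)).mp (by omega)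


open Filter in
/-- Existence of an unpredictable sequence with values in any finite metric
space with at least two elements: there are x, ε₀ > 0 and diverging sequences
ζ_n, η_n of positive integers with x_{i+ζ_n} = x_i for all i ≤ n and
d(x_{ζ_n+η_n}, x_{η_n}) ≥ ε₀ for all n. -/
theorem exists_unpredictable {S : Type*} [MetricSpace S] [Fintype S] [Nontrivial S] :
    ∃ (x : ℕ → S) (ε₀ : ℝ) (ζ η : ℕ → ℕ), 0 < ε₀ ∧
      (∀ n, 0 < ζ n) ∧ (∀ n, 0 < η n) ∧
      Tendsto ζ atTop atTop ∧ Tendsto η atTop atTop ∧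
      (∀ n, ∀ i ≤ n, x (i + ζ n) = x i) ∧
      (∀ n, ε₀ ≤ dist (x (ζ n + η n)) (x (η n))) := by
  haveI : Fact (Nat.Prime 2) := ⟨Nat.prime_two⟩
  obtain ⟨a, b, hab⟩ := exists_pair_ne S
  set x : ℕ → S := fun k => if Even (padicValNat 2 k) then a else b with hx
  set ζ : ℕ → ℕ := fun n => 2 ^ (2 * n + 2) with hζ
  have hζpos : ∀ n, 0 < ζ n := fun n => Nat.pow_pos (by norm_num)
  have hζge : ∀ n, n ≤ ζ n := fun n => le_of_lt (by
    calc n < 2 ^ n := Nat.lt_two_pow_self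
    _ ≤ ζ n := Nat.pow_le_pow_right (by norm_num) (by omega))
  have hten : Tendsto ζ atTop atTop := tendsto_atTop_mono hζge tendsto_id
  refine ⟨x, dist a b, ζ, ζ, dist_pos.mpr hab, hζpos, hζpos, hten, hten, ?_, ?_⟩
  · intro n i hin
    rcases Nat.eq_zero_or_pos i with rfl | hi
    · simp only [hx, hζ, Nat.zero_add]
      rw [padicValNat.prime_pow]
      simp [Nat.even_add, parity_simps]
    · simp only [hx, hζ]
      rw [padic_add_pow hi.ne' (padic_lt hi.ne' hin)]
  · intro n
    have h1 : ζ n + ζ n = 2 ^ (2 * n + 3) := by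
      simp only [hζ]; ring
    have h2 : x (ζ n + ζ n) = b := by
      rw [h1, hx]
      simp only [padicValNat.prime_pow]
      simp [Nat.even_add, parity_simps]
    have h3 : x (ζ n) = a := by
      simp only [hx, hζ, padicValNat.prime_pow]
      simp [Nat.even_add, parity_simps]
    rw [h2, h3, dist_comm]
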